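/- For the correlated two-item distribution taking value (4,0) with probability 1/2 − ε, (0,4) with probability 1/2 − ε, and (1/ε, 1/ε) with probability 2ε (for small ε > 0): the deterministic menu (4, 4, 1/ε) achieves revenue at least 6 − 8ε, while every submodular deterministic menu (a,b,c) with c ≤ a+b achieves revenue at most 4 + 8ε. Hence for sufficiently small ε, DRev(D) ≥ (3/2 − O(ε)) · SMDRev(D). -/
import Mathlib
set_option maxHeartbeats 1000000


open MeasureTheory

/-- Payment made by a utility-maximizing additive buyer with values `(v1, v2)` facing the
deterministic menu charging `a` for item 1, `b` for item 2, `c` for the pair;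
ties are broken in favor of the higher payment. -/
noncomputable def pay (a b c v1 v2 : ℝ) : ℝ :=
  let u1 := v1 - a
  let u2 := v2 - b
  let u12 := v1 + v2 - c
  let m := max (max 0 u1) (max u2 u12)
  max (if u1 = m then a else 0) (max (if u2 = m then b else 0) (if u12 = m then c else 0))

/-- Expected revenue of the menu `(a, b, c)` when values are drawn from `μ`. -/
noncomputable def rev (μ : Measure (ℝ × ℝ)) (a b c : ℝ) : ℝ :=
  ∫ v, pay a b c v.1 v.2 ∂μ

lemma measurable_pay (a b c : ℝ) : Measurable (fun v : ℝ × ℝ => pay a b c v.1 v.2) := by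
  unfold pay
  simp only
  have h : ∀ (f g : ℝ × ℝ → ℝ) (k : ℝ), Measurable f → Measurable g →
      Measurable (fun v => if f v = g v then k else 0) := by
    intro f g k hf hg
    exact Measurable.ite (measurableSet_eq_fun hf hg) measurable_const measurable_const
  apply Measurable.max
  · exact h _ _ a (by fun_prop) (by fun_prop)
  apply Measurable.max
  · exact h _ _ b (by fun_prop) (by fun_prop)
  · exact h _ _ c (by fun_prop) (by fun_prop)

lemma integrable_pay_dirac (a b c : ℝ) (x : ℝ × ℝ) (w : ENNReal) (hw : w ≠ ⊤) :
    Integrable (fun v : ℝ × ℝ => pay a b c v.1 v.2) (w • Measure.dirac x) := by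
  refine Integrable.smul_measure ⟨(measurable_pay a b c).aestronglyMeasurable, ?_⟩ hw
  rw [HasFiniteIntegral, lintegral_dirac]
  exact ENNReal.coe_lt_top

lemma pay_le {a b c v1 v2 X : ℝ} (hX : 0 ≤ X)
    (h1 : 0 ≤ v1 - a → v2 - b ≤ v1 - a → v1 + v2 - c ≤ v1 - a → a ≤ X)
    (h2 : 0 ≤ v2 - b → v1 - a ≤ v2 - b → v1 + v2 - c ≤ v2 - b → b ≤ X)
    (h3 : 0 ≤ v1 + v2 - c → v1 - a ≤ v1 + v2 - c → v2 - b ≤ v1 + v2 - c → c ≤ X) :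
    pay a b c v1 v2 ≤ X := by
  unfold pay
  simp only
  have hm0 : (0:ℝ) ≤ max (max 0 (v1 - a)) (max (v2 - b) (v1 + v2 - c)) :=
    le_max_of_le_left (le_max_left _ _)
  have hma : v1 - a ≤ max (max 0 (v1 - a)) (max (v2 - b) (v1 + v2 - c)) :=
    le_max_of_le_left (le_max_right _ _)
  have hmb : v2 - b ≤ max (max 0 (v1 - a)) (max (v2 - b) (v1 + v2 - c)) :=
    le_max_of_le_right (le_max_left _ _)
  have hmc : v1 + v2 - c ≤ max (max 0 (v1 - a)) (max (v2 - b) (v1 + v2 - c)) :=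
    le_max_of_le_right (le_max_right _ _)
  refine max_le ?_ (max_le ?_ ?_) <;> split_ifs with h
  · exact h1 (hm0.trans_eq h.symm) (hmb.trans_eq h.symm) (hmc.trans_eq h.symm)
  · exact hX
  · exact h2 (hm0.trans_eq h.symm) (hma.trans_eq h.symm) (hmc.trans_eq h.symm)
  · exact hX
  · exact h3 (hm0.trans_eq h.symm) (hma.trans_eq h.symm) (hmb.trans_eq h.symm)
  · exact hX

lemma le_pay₁ {a b c v1 v2 : ℝ}
    (h : v1 - a = max (max 0 (v1 - a)) (max (v2 - b) (v1 + v2 - c))) :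
    a ≤ pay a b c v1 v2 := by
  unfold pay
  simp only
  rw [if_pos h]
  exact le_max_left _ _

lemma le_pay₂ {a b c v1 v2 : ℝ}
    (h : v2 - b = max (max 0 (v1 - a)) (max (v2 - b) (v1 + v2 - c))) :
    b ≤ pay a b c v1 v2 := by
  unfold pay
  simp only
  refine le_max_of_le_right (le_max_of_le_left ?_)
  rw [if_pos h]

lemma le_pay₃ {a b c v1 v2 : ℝ}
    (h : v1 + v2 - c = max (max 0 (v1 - a)) (max (v2 - b) (v1 + v2 - c))) :
    c ≤ pay a b c v1 v2 := by
  unfold pay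
  simp only
  refine le_max_of_le_right (le_max_of_le_right ?_)
  rw [if_pos h]

lemma rev_formula (ε : ℝ) (hε : 0 < ε) (hε' : ε < 1 / 100) (a b c : ℝ) :
    rev (ENNReal.ofReal (1 / 2 - ε) • Measure.dirac ((4 : ℝ), (0 : ℝ)) +
      ENNReal.ofReal (1 / 2 - ε) • Measure.dirac ((0 : ℝ), (4 : ℝ)) +
      ENNReal.ofReal (2 * ε) • Measure.dirac (1 / ε, 1 / ε)) a b c
    = (1 / 2 - ε) * pay a b c 4 0 + (1 / 2 - ε) * pay a b c 0 4 +
      (2 * ε) * pay a b c (1 / ε) (1 / ε) := by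
  unfold rev
  rw [integral_add_measure
        (Integrable.add_measure (integrable_pay_dirac a b c _ _ ENNReal.ofReal_ne_top)
          (integrable_pay_dirac a b c _ _ ENNReal.ofReal_ne_top))
        (integrable_pay_dirac a b c _ _ ENNReal.ofReal_ne_top),
      integral_add_measure (integrable_pay_dirac a b c _ _ ENNReal.ofReal_ne_top)
        (integrable_pay_dirac a b c _ _ ENNReal.ofReal_ne_top),
      integral_smul_measure, integral_smul_measure, integral_smul_measure,
      integral_dirac, integral_dirac, integral_dirac,
      ENNReal.toReal_ofReal (by linarith : (0:ℝ) ≤ 1 / 2 - ε),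
      ENNReal.toReal_ofReal (by linarith : (0:ℝ) ≤ 2 * ε)]
  simp [smul_eq_mul]

theorem stmt14 (ε : ℝ) (hε : 0 < ε) (hε' : ε < 1 / 100) :
    let μ : Measure (ℝ × ℝ) :=
      ENNReal.ofReal (1 / 2 - ε) • Measure.dirac ((4 : ℝ), (0 : ℝ)) +
      ENNReal.ofReal (1 / 2 - ε) • Measure.dirac ((0 : ℝ), (4 : ℝ)) +
      ENNReal.ofReal (2 * ε) • Measure.dirac (1 / ε, 1 / ε)
    (6 - 8 * ε ≤ rev μ 4 4 (1 / ε)) ∧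
    (∀ a b c : ℝ, 0 ≤ a → 0 ≤ b → max a b ≤ c → c ≤ a + b → rev μ a b c ≤ 4 + 8 * ε) ∧
    (3 / 2 - 6 * ε) *
        sSup {r : ℝ | ∃ a b c : ℝ, 0 ≤ a ∧ 0 ≤ b ∧ max a b ≤ c ∧ c ≤ a + b ∧ r = rev μ a b c} ≤
      sSup {r : ℝ | ∃ a b c : ℝ, 0 ≤ a ∧ 0 ≤ b ∧ max a b ≤ c ∧ r = rev μ a b c} := by
  intro μ
  have hinv : (100:ℝ) < 1 / ε := (lt_div_iff₀ hε).2 (by linarith)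
  have hinv0 : (0:ℝ) < 1 / ε := by linarith
  have hrev : ∀ a b c : ℝ, rev μ a b c =
      (1 / 2 - ε) * pay a b c 4 0 + (1 / 2 - ε) * pay a b c 0 4 +
      (2 * ε) * pay a b c (1 / ε) (1 / ε) := fun a b c => rev_formula ε hε hε' a b c
  have he1 : (2 * ε) * (1 / ε) = 2 := by field_simp
  -- Part 1
  have part1 : 6 - 8 * ε ≤ rev μ 4 4 (1 / ε) := by
    rw [hrev]
    have hp1 : (4:ℝ) ≤ pay 4 4 (1 / ε) 4 0 := by
      apply le_pay₁
      rw [max_eq_left (by norm_num : (4:ℝ) - 4 ≤ 0),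
          max_eq_left (max_le (by norm_num) (by linarith))]
      norm_num
    have hp2 : (4:ℝ) ≤ pay 4 4 (1 / ε) 0 4 := by
      apply le_pay₂
      rw [max_eq_left (by norm_num : (0:ℝ) - 4 ≤ 0),
          max_eq_left (by linarith : (0:ℝ) + 4 - 1 / ε ≤ 4 - 4)]
      norm_num
    have hp3 : (1 / ε : ℝ) ≤ pay 4 4 (1 / ε) (1 / ε) (1 / ε) := by
      apply le_pay₃
      rw [max_eq_right (by linarith : (1:ℝ) / ε - 4 ≤ 1 / ε + 1 / ε - 1 / ε),
          max_eq_right]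
      exact max_le (by linarith) (by linarith)
    have t1 := mul_le_mul_of_nonneg_left hp1 (by linarith : (0:ℝ) ≤ 1 / 2 - ε)
    have t2 := mul_le_mul_of_nonneg_left hp2 (by linarith : (0:ℝ) ≤ 1 / 2 - ε)
    have t3 := mul_le_mul_of_nonneg_left hp3 (by linarith : (0:ℝ) ≤ 2 * ε)
    linarith
  -- Part 2
  have part2 : ∀ a b c : ℝ, 0 ≤ a → 0 ≤ b → max a b ≤ c → c ≤ a + b →
      rev μ a b c ≤ 4 + 8 * ε := by
    intro a b c ha hb hmax hsub
    have hac : a ≤ c := le_trans (le_max_left a b) hmax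
    have hbc : b ≤ c := le_trans (le_max_right a b) hmax
    have hc0 : 0 ≤ c := ha.trans hac
    rw [hrev]
    by_cases ha4 : a ≤ 4 <;> by_cases hb4 : b ≤ 4
    · -- both small: all payments ≤ 4, 4, c ≤ 8
      have hp1 : pay a b c 4 0 ≤ 4 :=
        pay_le (by norm_num) (fun _ _ _ => ha4) (fun h _ _ => by linarith)
          (fun h _ _ => by linarith)
      have hp2 : pay a b c 0 4 ≤ 4 :=
        pay_le (by norm_num) (fun h _ _ => by linarith) (fun _ _ _ => hb4)
          (fun h _ _ => by linarith)
      have hp3 : pay a b c (1 / ε) (1 / ε) ≤ c :=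
        pay_le hc0 (fun _ _ _ => hac) (fun _ _ _ => hbc) (fun _ _ _ => le_rfl)
      have t1 := mul_le_mul_of_nonneg_left hp1 (by linarith : (0:ℝ) ≤ 1 / 2 - ε)
      have t2 := mul_le_mul_of_nonneg_left hp2 (by linarith : (0:ℝ) ≤ 1 / 2 - ε)
      have t3 := mul_le_mul_of_nonneg_left hp3 (by linarith : (0:ℝ) ≤ 2 * ε)
      have hc8 : c ≤ 8 := by linarith
      nlinarith
    · -- a ≤ 4 < b
      push_neg at hb4
      have hp2 : pay a b c 0 4 ≤ 0 :=
        pay_le le_rfl (fun h _ _ => by linarith) (fun h _ _ => by linarith)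
          (fun h _ _ => by linarith)
      have hp1 : pay a b c 4 0 ≤ 4 :=
        pay_le (by norm_num) (fun _ _ _ => ha4) (fun h _ _ => by linarith)
          (fun h _ _ => by linarith)
      have hp3 : pay a b c (1 / ε) (1 / ε) ≤ 1 / ε + 4 :=
        pay_le (by linarith) (fun _ _ _ => by linarith)
          (fun h _ _ => by linarith) (fun _ h _ => by linarith)
      have t1 := mul_le_mul_of_nonneg_left hp1 (by linarith : (0:ℝ) ≤ 1 / 2 - ε)
      have t2 := mul_le_mul_of_nonneg_left hp2 (by linarith : (0:ℝ) ≤ 1 / 2 - ε)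
      have t3 := mul_le_mul_of_nonneg_left hp3 (by linarith : (0:ℝ) ≤ 2 * ε)
      have hx : (2 * ε) * (1 / ε + 4) = 2 + 8 * ε := by field_simp; ring
      linarith
    · -- b ≤ 4 < a
      push_neg at ha4
      have hp1 : pay a b c 4 0 ≤ 0 :=
        pay_le le_rfl (fun h _ _ => by linarith) (fun h _ _ => by linarith)
          (fun h _ _ => by linarith)
      have hp2 : pay a b c 0 4 ≤ 4 :=
        pay_le (by norm_num) (fun h _ _ => by linarith) (fun _ _ _ => hb4)
          (fun h _ _ => by linarith)
      have hp3 : pay a b c (1 / ε) (1 / ε) ≤ 1 / ε + 4 :=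
        pay_le (by linarith) (fun h _ _ => by linarith)
          (fun _ _ _ => by linarith) (fun _ _ h => by linarith)
      have t1 := mul_le_mul_of_nonneg_left hp1 (by linarith : (0:ℝ) ≤ 1 / 2 - ε)
      have t2 := mul_le_mul_of_nonneg_left hp2 (by linarith : (0:ℝ) ≤ 1 / 2 - ε)
      have t3 := mul_le_mul_of_nonneg_left hp3 (by linarith : (0:ℝ) ≤ 2 * ε)
      have hx : (2 * ε) * (1 / ε + 4) = 2 + 8 * ε := by field_simp; ring
      linarith
    · -- both large
      push_neg at ha4 hb4
      have hp1 : pay a b c 4 0 ≤ 0 :=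
        pay_le le_rfl (fun h _ _ => by linarith) (fun h _ _ => by linarith)
          (fun h _ _ => by linarith)
      have hp2 : pay a b c 0 4 ≤ 0 :=
        pay_le le_rfl (fun h _ _ => by linarith) (fun h _ _ => by linarith)
          (fun h _ _ => by linarith)
      have hp3 : pay a b c (1 / ε) (1 / ε) ≤ 1 / ε + 1 / ε :=
        pay_le (by linarith) (fun h _ _ => by linarith)
          (fun h _ _ => by linarith) (fun h _ _ => by linarith)
      have t1 := mul_le_mul_of_nonneg_left hp1 (by linarith : (0:ℝ) ≤ 1 / 2 - ε)
      have t2 := mul_le_mul_of_nonneg_left hp2 (by linarith : (0:ℝ) ≤ 1 / 2 - ε)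
      have t3 := mul_le_mul_of_nonneg_left hp3 (by linarith : (0:ℝ) ≤ 2 * ε)
      have hx : (2 * ε) * (1 / ε + 1 / ε) = 4 := by field_simp; ring
      linarith
  refine ⟨part1, part2, ?_⟩
  -- Part 3
  have hub : ∀ a b c : ℝ, 0 ≤ a → 0 ≤ b → max a b ≤ c → rev μ a b c ≤ 8 := by
    intro a b c ha hb hmax
    have hac : a ≤ c := le_trans (le_max_left a b) hmax
    rw [hrev]
    have hp1 : pay a b c 4 0 ≤ 4 :=
      pay_le (by norm_num) (fun h _ _ => by linarith) (fun h _ _ => by linarith)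
        (fun h _ _ => by linarith)
    have hp2 : pay a b c 0 4 ≤ 4 :=
      pay_le (by norm_num) (fun h _ _ => by linarith) (fun h _ _ => by linarith)
        (fun h _ _ => by linarith)
    have hp3 : pay a b c (1 / ε) (1 / ε) ≤ 1 / ε + 1 / ε :=
      pay_le (by linarith) (fun h _ _ => by linarith)
        (fun h _ _ => by linarith) (fun h _ _ => by linarith)
    have t1 := mul_le_mul_of_nonneg_left hp1 (by linarith : (0:ℝ) ≤ 1 / 2 - ε)
    have t2 := mul_le_mul_of_nonneg_left hp2 (by linarith : (0:ℝ) ≤ 1 / 2 - ε)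
    have t3 := mul_le_mul_of_nonneg_left hp3 (by linarith : (0:ℝ) ≤ 2 * ε)
    have hx : (2 * ε) * (1 / ε + 1 / ε) = 4 := by field_simp; ring
    linarith
  have hS1 : sSup {r : ℝ | ∃ a b c : ℝ, 0 ≤ a ∧ 0 ≤ b ∧ max a b ≤ c ∧ c ≤ a + b ∧
      r = rev μ a b c} ≤ 4 + 8 * ε := by
    apply Real.sSup_le
    · rintro r ⟨a, b, c, ha, hb, hmax, hsub, rfl⟩
      exact part2 a b c ha hb hmax hsub
    · linarith
  have hS2 : 6 - 8 * ε ≤ sSup {r : ℝ | ∃ a b c : ℝ, 0 ≤ a ∧ 0 ≤ b ∧ max a b ≤ c ∧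
      r = rev μ a b c} := by
    refine le_trans part1 (le_csSup ?_ ?_)
    · refine ⟨8, ?_⟩
      rintro r ⟨a, b, c, ha, hb, hmax, rfl⟩
      exact hub a b c ha hb hmax
    · exact ⟨4, 4, 1 / ε, by norm_num, by norm_num, by rw [max_self]; linarith, rfl⟩
  have hfac : (0:ℝ) ≤ 3 / 2 - 6 * ε := by linarith
  calc (3 / 2 - 6 * ε) * sSup {r : ℝ | ∃ a b c : ℝ, 0 ≤ a ∧ 0 ≤ b ∧ max a b ≤ c ∧
          c ≤ a + b ∧ r = rev μ a b c}
      ≤ (3 / 2 - 6 * ε) * (4 + 8 * ε) := mul_le_mul_of_nonneg_left hS1 hfac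
    _ ≤ 6 - 8 * ε := by nlinarith
    _ ≤ _ := hS2
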